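/- arXiv:2404.17016 — 3 statements merged into one kernel-verified Lean document; each statement's English description precedes it below -/
import Mathlib

section
/- The functional tr⁺ satisfies the data processing inequality: for any quantum channel Φ (completely positive trace-preserving map), quantum states ρ, σ, and s ∈ ℝ, tr⁺(Φ(σ)s − Φ(ρ)) ≤ tr⁺(σ s − ρ). -/
open scoped ComplexOrder

/-- A quantum state: positive semidefinite with unit trace. -/
def IsState {d : ℕ} (ρ : Matrix (Fin d) (Fin d) ℂ) : Prop :=
  ρ.PosSemidef ∧ ρ.trace = 1

/-- `tr⁺(A) = sup { tr(PA) : 0 ≤ P ≤ 1 }`. -/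
noncomputable def trPlus {d : ℕ} (A : Matrix (Fin d) (Fin d) ℂ) : ℝ :=
  sSup {x : ℝ | ∃ P : Matrix (Fin d) (Fin d) ℂ,
    P.PosSemidef ∧ (1 - P).PosSemidef ∧ x = ((P * A).trace).re}

open Matrix in
lemma trace_re_nonneg_of_psd {n : ℕ} {A : Matrix (Fin n) (Fin n) ℂ}
    (hA : A.PosSemidef) : 0 ≤ A.trace.re := by
  rw [Matrix.trace]
  simp only [Complex.re_sum]
  refine Finset.sum_nonneg fun i _ => ?_
  have h := hA.re_dotProduct_nonneg (Pi.single i 1)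
  simpa [Matrix.mulVec_single, Matrix.diag, dotProduct, Pi.single_apply,
    Finset.sum_ite_eq'] using h

open scoped MatrixOrder in
open Matrix in
lemma trace_mul_re_nonneg {n : ℕ} {P B : Matrix (Fin n) (Fin n) ℂ}
    (hP : P.PosSemidef) (hB : B.PosSemidef) : 0 ≤ ((P * B).trace).re := by
  have h1 : P * B = P * (CFC.sqrt B * CFC.sqrt B) := by rw [CFC.sqrt_mul_sqrt_self B hB.nonneg]
  have h2 : (P * B).trace = ((CFC.sqrt B)ᴴ * P * CFC.sqrt B).trace := by
    rw [h1, (Matrix.nonneg_iff_posSemidef.mp (CFC.sqrt_nonneg B)).1, ← Matrix.mul_assoc, Matrix.trace_mul_cycle]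
  rw [h2]
  exact trace_re_nonneg_of_psd (hP.conjTranspose_mul_mul_same _)

open Matrix in
lemma trace_mul_re_le {n : ℕ} {P B : Matrix (Fin n) (Fin n) ℂ}
    (hP : P.PosSemidef) (hP1 : (1 - P).PosSemidef) (hB : B.PosSemidef) :
    ((P * B).trace).re ≤ B.trace.re := by
  have h := trace_mul_re_nonneg hP1 hB
  have : ((1 - P) * B).trace = B.trace - (P * B).trace := by
    rw [Matrix.sub_mul, Matrix.one_mul, Matrix.trace_sub]
  rw [this, Complex.sub_re] at h
  linarith

open Matrix in
/-- Jordan decomposition for a Hermitian matrix, together with a witness projector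
attaining the trace of the positive part. -/
lemma jordan_decomp {n : ℕ} {A : Matrix (Fin n) (Fin n) ℂ} (hA : A.IsHermitian) :
    ∃ Q S : Matrix (Fin n) (Fin n) ℂ, Q.PosSemidef ∧ S.PosSemidef ∧ A = Q - S ∧
      ∃ P : Matrix (Fin n) (Fin n) ℂ, P.PosSemidef ∧ (1 - P).PosSemidef ∧
        (P * A).trace = Q.trace := by
  set u : Matrix (Fin n) (Fin n) ℂ := (hA.eigenvectorUnitary : Matrix (Fin n) (Fin n) ℂ)
  have huu : u * star u = 1 := (Matrix.mem_unitaryGroup_iff).mp hA.eigenvectorUnitary.2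
  have huu' : star u * u = 1 := (Matrix.mem_unitaryGroup_iff').mp hA.eigenvectorUnitary.2
  set lam := hA.eigenvalues
  set fQ : Fin n → ℂ := fun i => ((max (lam i) 0 : ℝ) : ℂ)
  set fS : Fin n → ℂ := fun i => ((max (-(lam i)) 0 : ℝ) : ℂ)
  set fP : Fin n → ℂ := fun i => if 0 < lam i then (1 : ℂ) else 0
  refine ⟨u * Matrix.diagonal fQ * star u, u * Matrix.diagonal fS * star u,
    ?_, ?_, ?_, u * Matrix.diagonal fP * star u, ?_, ?_, ?_⟩
  · exact (Matrix.PosSemidef.diagonal fun i => by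
      simpa [fQ] using Complex.ofReal_nonneg.mpr (le_max_right _ _)).mul_mul_conjTranspose_same u
  · exact (Matrix.PosSemidef.diagonal fun i => by
      simpa [fS] using Complex.ofReal_nonneg.mpr (le_max_right _ _)).mul_mul_conjTranspose_same u
  · have hfg : (fun i => fQ i - fS i) = RCLike.ofReal ∘ lam := by
      funext i
      show (↑(lam i ⊔ 0) : ℂ) - ↑(-lam i ⊔ 0) = RCLike.ofReal (lam i)
      rw [← Complex.ofReal_sub]
      have hmx : (lam i ⊔ 0) - (-lam i ⊔ 0) = lam i := by
        rcases le_total 0 (lam i) with h | h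
        · rw [max_eq_left h, max_eq_right (neg_nonpos.mpr h)]; ring
        · rw [max_eq_right h, max_eq_left (neg_nonneg.mpr h)]; ring
      rw [hmx]; rfl
    rw [← Matrix.sub_mul, ← Matrix.mul_sub, Matrix.diagonal_sub, hfg]
    exact hA.spectral_theorem
  · exact (Matrix.PosSemidef.diagonal fun i => by
      dsimp [fP]; split <;> norm_num).mul_mul_conjTranspose_same u
  · have h1 : (1 : Matrix (Fin n) (Fin n) ℂ) - u * Matrix.diagonal fP * star u
        = u * Matrix.diagonal (fun i => 1 - fP i) * star u := by
      have : Matrix.diagonal (fun i => 1 - fP i)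
          = 1 - Matrix.diagonal fP := by
        rw [← Matrix.diagonal_one, Matrix.diagonal_sub]
      rw [this, Matrix.mul_sub, Matrix.sub_mul, Matrix.mul_one, huu]
    rw [h1]
    exact (Matrix.PosSemidef.diagonal fun i => by
      dsimp [fP]; split <;> norm_num).mul_mul_conjTranspose_same u
  · conv_lhs => rw [hA.spectral_theorem, Unitary.conjStarAlgAut_apply]
    have h2 : u * Matrix.diagonal fP * star u * (u * Matrix.diagonal (RCLike.ofReal ∘ lam) * star u)
        = u * (Matrix.diagonal fP * Matrix.diagonal (RCLike.ofReal ∘ lam)) * star u := by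
      simp only [Matrix.mul_assoc]
      rw [← Matrix.mul_assoc (star u) u, huu', Matrix.one_mul]
    rw [h2]
    have htr : ∀ M : Matrix (Fin n) (Fin n) ℂ, (u * M * star u).trace = M.trace := by
      intro M
      rw [Matrix.trace_mul_cycle, huu', Matrix.one_mul]
    rw [htr, htr, Matrix.diagonal_mul_diagonal, Matrix.trace_diagonal, Matrix.trace_diagonal]
    refine Finset.sum_congr rfl fun i _ => ?_
    show (if 0 < lam i then (1:ℂ) else 0) * RCLike.ofReal (lam i) = ↑(lam i ⊔ 0)
    rcases lt_or_ge 0 (lam i) with h | h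
    · rw [if_pos h, one_mul, max_eq_left h.le]; rfl
    · rw [if_neg (not_lt.mpr h), zero_mul, max_eq_right h]; simp

/-- Data processing inequality for `tr⁺`: for a positive trace-preserving linear map Φ,
quantum states ρ, σ and any s ∈ ℝ, `tr⁺(Φ(σ)s − Φ(ρ)) ≤ tr⁺(σs − ρ)`. -/
theorem trPlus_dpi {d e : ℕ}
    (Φ : Matrix (Fin d) (Fin d) ℂ →ₗ[ℂ] Matrix (Fin e) (Fin e) ℂ)
    (hpos : ∀ A : Matrix (Fin d) (Fin d) ℂ, A.PosSemidef → (Φ A).PosSemidef)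
    (htr : ∀ A : Matrix (Fin d) (Fin d) ℂ, (Φ A).trace = A.trace)
    (ρ σ : Matrix (Fin d) (Fin d) ℂ) (hρ : IsState ρ) (hσ : IsState σ) (s : ℝ) :
    trPlus (s • Φ σ - Φ ρ) ≤ trPlus (s • σ - ρ) := by
  set A := s • σ - ρ with hAdef
  have hA : A.IsHermitian := by
    have hσh := hσ.1.1
    have hρh := hρ.1.1
    unfold Matrix.IsHermitian at *
    rw [hAdef, Matrix.conjTranspose_sub, hρh, Matrix.conjTranspose_smul, hσh, star_trivial]
  have hΦA : Φ A = s • Φ σ - Φ ρ := by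
    rw [hAdef, map_sub, LinearMap.map_smul_of_tower]
  obtain ⟨Q, S, hQ, hS, hQS, P₀, hP₀, hP₀1, hP₀tr⟩ := jordan_decomp hA
  -- every element of the RHS sup-set is ≤ Q.trace.re, hence the set is bounded above
  have hbound : ∀ x ∈ {x : ℝ | ∃ P : Matrix (Fin d) (Fin d) ℂ,
      P.PosSemidef ∧ (1 - P).PosSemidef ∧ x = ((P * A).trace).re}, x ≤ Q.trace.re := by
    rintro x ⟨P, hP, hP1, rfl⟩
    have : P * A = P * Q - P * S := by rw [hQS, Matrix.mul_sub]
    rw [this, Matrix.trace_sub, Complex.sub_re]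
    have h1 := trace_mul_re_le hP hP1 hQ
    have h2 := trace_mul_re_nonneg hP hS
    linarith
  have hbdd : BddAbove {x : ℝ | ∃ P : Matrix (Fin d) (Fin d) ℂ,
      P.PosSemidef ∧ (1 - P).PosSemidef ∧ x = ((P * A).trace).re} := ⟨Q.trace.re, hbound⟩
  have hmem : Q.trace.re ∈ {x : ℝ | ∃ P : Matrix (Fin d) (Fin d) ℂ,
      P.PosSemidef ∧ (1 - P).PosSemidef ∧ x = ((P * A).trace).re} :=
    ⟨P₀, hP₀, hP₀1, by rw [hP₀tr]⟩
  have hQle : Q.trace.re ≤ trPlus A := le_csSup hbdd hmem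
  -- LHS: every element is ≤ Q.trace.re
  have hQnn : 0 ≤ Q.trace.re := trace_re_nonneg_of_psd hQ
  refine le_trans ?_ hQle
  apply Real.sSup_le _ hQnn
  rintro x ⟨P, hP, hP1, rfl⟩
  have hrw : s • Φ σ - Φ ρ = Φ Q - Φ S := by rw [← hΦA, hQS, map_sub]
  rw [hrw]
  have : P * (Φ Q - Φ S) = P * Φ Q - P * Φ S := by rw [Matrix.mul_sub]
  rw [this, Matrix.trace_sub, Complex.sub_re]
  have h1 := trace_mul_re_le hP hP1 (hpos Q hQ)
  have h2 := trace_mul_re_nonneg hP (hpos S hS)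
  have h3 : (Φ Q).trace = Q.trace := htr Q
  rw [h3] at h1
  linarith
end

section
/- For quantum states ρ, σ and 0 < a < b, the estimate ∫_a^b (1/s)·tr⁺(sσ − ρ) ds ≥ tr⁺((b − a)σ + log(a/b)·ρ) holds. -/
open scoped ComplexOrder

lemma psd_diag_re_nonneg {d : ℕ} {M : Matrix (Fin d) (Fin d) ℂ} (hM : M.PosSemidef) (i : Fin d) :
    0 ≤ (M i i).re := by
  have h : (0:ℂ) ≤ M i i := by
    have := hM.2 (Finsupp.single i 1)
    simpa [dotProduct, Pi.single_apply] using this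
  exact (Complex.le_def.mp h).1

lemma psd_trace_re_nonneg {d : ℕ} {M : Matrix (Fin d) (Fin d) ℂ} (hM : M.PosSemidef) :
    0 ≤ M.trace.re := by
  rw [Matrix.trace, Complex.re_sum]
  exact Finset.sum_nonneg fun i _ => psd_diag_re_nonneg hM i

lemma psd_mul_trace_re_nonneg {d : ℕ} {X Y : Matrix (Fin d) (Fin d) ℂ}
    (hX : X.PosSemidef) (hY : Y.PosSemidef) : 0 ≤ ((X * Y).trace).re := by
  open scoped MatrixOrder Matrix.Norms.L2Operator in
  obtain ⟨B, rfl⟩ := CStarAlgebra.nonneg_iff_eq_star_mul_self.mp hX.nonneg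
  rw [Matrix.mul_assoc, Matrix.trace_mul_comm]
  exact psd_trace_re_nonneg (hY.mul_mul_conjTranspose_same B)

lemma tr_mul_state_mem_Icc {d : ℕ} {P σ : Matrix (Fin d) (Fin d) ℂ}
    (hP : P.PosSemidef) (hP1 : (1 - P).PosSemidef) (hσ : IsState σ) :
    ((P * σ).trace).re ∈ Set.Icc (0:ℝ) 1 := by
  constructor
  · exact psd_mul_trace_re_nonneg hP hσ.1
  · have h := psd_mul_trace_re_nonneg hP1 hσ.1
    rw [Matrix.sub_mul, Matrix.one_mul, Matrix.trace_sub, Complex.sub_re] at h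
    have : σ.trace.re = 1 := by rw [hσ.2]; simp
    linarith

lemma trace_expand {d : ℕ} (P σ ρ : Matrix (Fin d) (Fin d) ℂ) (t : ℝ) :
    ((P * (t • σ - ρ)).trace).re = t * ((P * σ).trace).re - ((P * ρ).trace).re := by
  rw [Matrix.mul_sub, Matrix.mul_smul, Matrix.trace_sub, Matrix.trace_smul,
    Complex.sub_re, Complex.smul_re, smul_eq_mul]

lemma trace_expand' {d : ℕ} (P σ ρ : Matrix (Fin d) (Fin d) ℂ) (u v : ℝ) :
    ((P * (u • σ + v • ρ)).trace).re = u * ((P * σ).trace).re + v * ((P * ρ).trace).re := by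
  rw [Matrix.mul_add, Matrix.mul_smul, Matrix.mul_smul, Matrix.trace_add, Matrix.trace_smul,
    Matrix.trace_smul, Complex.add_re, Complex.smul_re, Complex.smul_re, smul_eq_mul, smul_eq_mul]

lemma trPlus_set_nonempty {d : ℕ} (A : Matrix (Fin d) (Fin d) ℂ) :
    Set.Nonempty {x : ℝ | ∃ P : Matrix (Fin d) (Fin d) ℂ,
      P.PosSemidef ∧ (1 - P).PosSemidef ∧ x = ((P * A).trace).re} :=
  ⟨0, 0, Matrix.PosSemidef.zero, by simpa using Matrix.PosSemidef.one, by simp⟩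

lemma trPlus_set_bddAbove {d : ℕ} {σ ρ : Matrix (Fin d) (Fin d) ℂ}
    (hσ : IsState σ) (hρ : IsState ρ) (t : ℝ) :
    BddAbove {x : ℝ | ∃ P : Matrix (Fin d) (Fin d) ℂ,
      P.PosSemidef ∧ (1 - P).PosSemidef ∧ x = ((P * (t • σ - ρ)).trace).re} := by
  refine ⟨|t|, fun x hx => ?_⟩
  obtain ⟨P, hP, hP1, rfl⟩ := hx
  rw [trace_expand]
  have h1 := tr_mul_state_mem_Icc hP hP1 hσ
  have h2 := psd_mul_trace_re_nonneg hP hρ.1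
  have : t * ((P * σ).trace).re ≤ |t| := by
    calc t * ((P * σ).trace).re ≤ |t| * |((P * σ).trace).re| := by
          rw [← abs_mul]; exact le_abs_self _
      _ ≤ |t| * 1 := by
          apply mul_le_mul_of_nonneg_left _ (abs_nonneg t)
          rw [abs_of_nonneg h1.1]; exact h1.2
      _ = |t| := mul_one _
  linarith

lemma le_trPlus {d : ℕ} {σ ρ P : Matrix (Fin d) (Fin d) ℂ}
    (hσ : IsState σ) (hρ : IsState ρ) (hP : P.PosSemidef) (hP1 : (1 - P).PosSemidef) (t : ℝ) :
    ((P * (t • σ - ρ)).trace).re ≤ trPlus (t • σ - ρ) :=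
  le_csSup (trPlus_set_bddAbove hσ hρ t) ⟨P, hP, hP1, rfl⟩

lemma trPlus_lip {d : ℕ} {σ ρ : Matrix (Fin d) (Fin d) ℂ}
    (hσ : IsState σ) (hρ : IsState ρ) (s t : ℝ) :
    trPlus (s • σ - ρ) ≤ trPlus (t • σ - ρ) + |s - t| := by
  apply csSup_le (trPlus_set_nonempty _)
  rintro x ⟨P, hP, hP1, rfl⟩
  have h1 := tr_mul_state_mem_Icc hP hP1 hσ
  have key : ((P * (s • σ - ρ)).trace).re
      = ((P * (t • σ - ρ)).trace).re + (s - t) * ((P * σ).trace).re := by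
    rw [trace_expand, trace_expand]; ring
  rw [key]
  have h2 : (s - t) * ((P * σ).trace).re ≤ |s - t| := by
    calc (s - t) * ((P * σ).trace).re ≤ |s - t| * |((P * σ).trace).re| := by
          rw [← abs_mul]; exact le_abs_self _
      _ ≤ |s - t| * 1 := by
          apply mul_le_mul_of_nonneg_left _ (abs_nonneg _)
          rw [abs_of_nonneg h1.1]; exact h1.2
      _ = |s - t| := mul_one _
  have h3 := le_trPlus hσ hρ hP hP1 t
  linarith

lemma trPlus_cont {d : ℕ} {σ ρ : Matrix (Fin d) (Fin d) ℂ}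
    (hσ : IsState σ) (hρ : IsState ρ) :
    Continuous (fun s : ℝ => trPlus (s • σ - ρ)) := by
  apply LipschitzWith.continuous (K := 1)
  apply LipschitzWith.of_dist_le_mul
  intro s t
  rw [Real.dist_eq, Real.dist_eq, NNReal.coe_one, one_mul]
  rw [abs_sub_le_iff]
  constructor
  · have := trPlus_lip hσ hρ s t; linarith [this]
  · have := trPlus_lip hσ hρ t s
    rw [abs_sub_comm] at this; linarith

/-- For quantum states ρ, σ and 0 < a < b:
`∫_a^b (1/s)·tr⁺(sσ − ρ) ds ≥ tr⁺((b − a)σ + log(a/b)·ρ)`. -/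
theorem integral_trPlus_ge {d : ℕ} (ρ σ : Matrix (Fin d) (Fin d) ℂ)
    (hρ : IsState ρ) (hσ : IsState σ) (a b : ℝ) (ha : 0 < a) (hab : a < b) :
    trPlus ((b - a) • σ + Real.log (a / b) • ρ)
      ≤ ∫ s in a..b, s⁻¹ * trPlus (s • σ - ρ) := by
  have hb : 0 < b := lt_trans ha hab
  have hIcc : Set.uIcc a b = Set.Icc a b := Set.uIcc_of_le hab.le
  -- continuity/integrability of upper function
  have hgcont : ContinuousOn (fun s : ℝ => s⁻¹ * trPlus (s • σ - ρ)) (Set.uIcc a b) := by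
    rw [hIcc]
    apply ContinuousOn.mul
    · intro s hs
      exact (continuousAt_inv₀ (ne_of_gt (lt_of_lt_of_le ha hs.1))).continuousWithinAt
    · exact (trPlus_cont hσ hρ).continuousOn
  have hg : IntervalIntegrable (fun s : ℝ => s⁻¹ * trPlus (s • σ - ρ)) MeasureTheory.volume a b :=
    hgcont.intervalIntegrable
  apply csSup_le (trPlus_set_nonempty _)
  rintro x ⟨P, hP, hP1, rfl⟩
  set p := ((P * σ).trace).re with hp
  set q := ((P * ρ).trace).re with hq
  rw [trace_expand' P σ ρ]
  -- lower function
  have hfcont : ContinuousOn (fun s : ℝ => p - q * s⁻¹) (Set.uIcc a b) := by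
    rw [hIcc]
    apply ContinuousOn.sub continuousOn_const
    apply ContinuousOn.mul continuousOn_const
    intro s hs
    exact (continuousAt_inv₀ (ne_of_gt (lt_of_lt_of_le ha hs.1))).continuousWithinAt
  have hf : IntervalIntegrable (fun s : ℝ => p - q * s⁻¹) MeasureTheory.volume a b :=
    hfcont.intervalIntegrable
  have hint : ∫ s in a..b, (p - q * s⁻¹)
      = (b - a) * p + Real.log (a / b) * q := by
    rw [intervalIntegral.integral_sub intervalIntegrable_const
      (IntervalIntegrable.const_mul (by
        apply ContinuousOn.intervalIntegrable
        rw [hIcc]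
        intro s hs
        exact (continuousAt_inv₀ (ne_of_gt (lt_of_lt_of_le ha hs.1))).continuousWithinAt) q)]
    rw [intervalIntegral.integral_const, intervalIntegral.integral_const_mul,
      integral_inv_of_pos ha hb]
    rw [Real.log_div (ne_of_gt ha) (ne_of_gt hb), Real.log_div (ne_of_gt hb) (ne_of_gt ha)]
    simp [smul_eq_mul]
    ring
  rw [← hint]
  apply intervalIntegral.integral_mono_on hab.le hf hg
  intro s hs
  have hs0 : 0 < s := lt_of_lt_of_le ha hs.1
  have heq : p - q * s⁻¹ = s⁻¹ * (s * p - q) := by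
    field_simp
  rw [heq, ← trace_expand P σ ρ s]
  exact mul_le_mul_of_nonneg_left (le_trPlus hσ hρ hP hP1 s) (inv_nonneg.mpr hs0.le)
end

section
/- For quantum states ρ, σ on a d-dimensional Hilbert space with μσ ≤ ρ ≤ λσ (0 < μ < λ), and any grid μ = t₁ ≤ … ≤ t_r = λ with maximal step size δ = max_k (t_{k+1} − t_k), the discretisation error of the lower-bound approximation to ∫_μ^λ (1/s)·tr⁺(sσ − ρ) ds is at most 2δ²d/μ; in particular the gap between the grid-based upper and lower bounds on D(ρ‖σ) is at most 2δ²d/μ. -/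
open scoped ComplexOrder

namespace DiscGapAux

open Matrix Finset

variable {d : ℕ} {A P : Matrix (Fin d) (Fin d) ℂ}

lemma psd_diag_re_nonneg (hM : A.PosSemidef) (i : Fin d) : 0 ≤ (A i i).re := by
  have h := hM.dotProduct_mulVec_nonneg (Pi.single i 1)
  have he : star (Pi.single i 1 : Fin d → ℂ) ⬝ᵥ (A *ᵥ Pi.single i 1) = A i i := by
    simp [Matrix.mulVec_single, dotProduct, Pi.single_apply]
  rw [he] at h
  exact (Complex.le_def.mp h).1

lemma re_trace_nonneg (hM : A.PosSemidef) : 0 ≤ (A.trace).re := by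
  rw [Matrix.trace, Complex.re_sum]
  exact Finset.sum_nonneg fun i _ => psd_diag_re_nonneg hM i

lemma trPlus_isGreatest (hA : A.IsHermitian) :
    IsGreatest {x : ℝ | ∃ P : Matrix (Fin d) (Fin d) ℂ,
      P.PosSemidef ∧ (1 - P).PosSemidef ∧ x = ((P * A).trace).re}
      (∑ i, max 0 (hA.eigenvalues i)) := by
  set U : Matrix (Fin d) (Fin d) ℂ := (hA.eigenvectorUnitary : Matrix (Fin d) (Fin d) ℂ) with hU
  have hUU : U * Uᴴ = 1 := by
    rw [← Matrix.star_eq_conjTranspose]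
    exact Matrix.mem_unitaryGroup_iff.mp hA.eigenvectorUnitary.2
  have hUU' : Uᴴ * U = 1 := by
    rw [← Matrix.star_eq_conjTranspose]
    exact Matrix.mem_unitaryGroup_iff'.mp hA.eigenvectorUnitary.2
  set D : Matrix (Fin d) (Fin d) ℂ := diagonal (RCLike.ofReal ∘ hA.eigenvalues) with hD
  have hspec : A = U * D * Uᴴ := by
    rw [← Matrix.star_eq_conjTranspose]; exact hA.spectral_theorem
  constructor
  · -- membership
    set g : Fin d → ℂ := fun i => if 0 ≤ hA.eigenvalues i then 1 else 0 with hg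
    refine ⟨U * diagonal g * Uᴴ, ?_, ?_, ?_⟩
    · exact (Matrix.PosSemidef.diagonal (fun i => by by_cases h : 0 ≤ hA.eigenvalues i <;>
        simp [hg, h])).mul_mul_conjTranspose_same U
    · have : (1 : Matrix (Fin d) (Fin d) ℂ) - U * diagonal g * Uᴴ
          = U * diagonal (fun i => 1 - g i) * Uᴴ := by
        have : (diagonal (fun i => 1 - g i) : Matrix (Fin d) (Fin d) ℂ)
            = 1 - diagonal g := by
          rw [← Matrix.diagonal_one, ← Matrix.diagonal_sub]
        rw [this, Matrix.mul_sub, Matrix.mul_one, Matrix.sub_mul, hUU]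
      rw [this]
      exact (Matrix.PosSemidef.diagonal (fun i => by by_cases h : 0 ≤ hA.eigenvalues i <;>
        simp [hg, h])).mul_mul_conjTranspose_same U
    · have key : (U * diagonal g * Uᴴ * A).trace = (diagonal g * D).trace := by
        have h1 : (U * diagonal g * Uᴴ * A).trace = (U * diagonal g * Uᴴ * (U * D * Uᴴ)).trace := by
          rw [← hspec]
        have h2 : U * diagonal g * Uᴴ * (U * D * Uᴴ) = U * (diagonal g * D) * Uᴴ := by
          rw [Matrix.mul_assoc (U * diagonal g) Uᴴ (U * D * Uᴴ),
            Matrix.mul_assoc U D Uᴴ, ← Matrix.mul_assoc Uᴴ U (D * Uᴴ), hUU', Matrix.one_mul]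
          simp only [Matrix.mul_assoc]
        rw [h1, h2, Matrix.trace_mul_cycle, ← Matrix.mul_assoc, hUU', Matrix.one_mul]
      rw [key, hD, Matrix.diagonal_mul_diagonal, Matrix.trace_diagonal, Complex.re_sum]
      refine (Finset.sum_congr rfl fun i _ => ?_).symm
      by_cases h : 0 ≤ hA.eigenvalues i
      · simp [hg, h, max_eq_right h]
      · simp [hg, h, max_eq_left (le_of_not_ge h)]
  · -- upper bound
    rintro x ⟨P, hP, hP1, rfl⟩
    have hM : (Uᴴ * P * U).PosSemidef := hP.conjTranspose_mul_mul_same U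
    have hM1 : (1 - Uᴴ * P * U).PosSemidef := by
      have : (1 : Matrix (Fin d) (Fin d) ℂ) - Uᴴ * P * U = Uᴴ * (1 - P) * U := by
        rw [Matrix.mul_sub, Matrix.mul_one, Matrix.sub_mul, hUU']
      rw [this]
      exact hP1.conjTranspose_mul_mul_same U
    have htr : ((P * A).trace) = ((Uᴴ * P * U * D).trace) := by
      have h1 : (P * A).trace = (P * (U * D * Uᴴ)).trace := by rw [← hspec]
      have h2 : P * (U * D * Uᴴ) = (P * U) * D * Uᴴ := by
        simp only [Matrix.mul_assoc]
      rw [h1, h2, Matrix.trace_mul_cycle]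
      simp only [Matrix.mul_assoc]
    rw [htr]
    set M := Uᴴ * P * U with hMdef
    have htr2 : ((M * D).trace).re
        = ∑ i, hA.eigenvalues i * (M i i).re := by
      rw [Matrix.trace, Complex.re_sum]
      refine Finset.sum_congr rfl fun i _ => ?_
      rw [Matrix.diag_apply, hD, Matrix.mul_diagonal]
      rw [mul_comm]
      exact Complex.re_ofReal_mul _ _
    rw [htr2]
    refine Finset.sum_le_sum fun i _ => ?_
    have h0 : 0 ≤ (M i i).re := psd_diag_re_nonneg hM i
    have h1 : (M i i).re ≤ 1 := by
      have := psd_diag_re_nonneg hM1 i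
      simp only [Matrix.sub_apply, Matrix.one_apply_eq, Complex.sub_re, Complex.one_re] at this
      linarith
    rcases le_or_gt 0 (hA.eigenvalues i) with h | h
    · calc hA.eigenvalues i * (M i i).re ≤ hA.eigenvalues i * 1 :=
            mul_le_mul_of_nonneg_left h1 h
        _ = hA.eigenvalues i := mul_one _
        _ ≤ max 0 (hA.eigenvalues i) := le_max_right _ _
    · exact le_trans (mul_nonpos_of_nonpos_of_nonneg h.le h0) (le_max_left _ _)

lemma trPlus_def : trPlus A = sSup {x : ℝ | ∃ P : Matrix (Fin d) (Fin d) ℂ,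
    P.PosSemidef ∧ (1 - P).PosSemidef ∧ x = ((P * A).trace).re} := rfl

lemma le_trPlus (hA : A.IsHermitian) (hP : P.PosSemidef) (hP1 : (1 - P).PosSemidef) :
    ((P * A).trace).re ≤ trPlus A := by
  rw [trPlus_def]
  exact le_csSup (trPlus_isGreatest hA).bddAbove ⟨P, hP, hP1, rfl⟩

lemma exists_trPlus (hA : A.IsHermitian) :
    ∃ P : Matrix (Fin d) (Fin d) ℂ, P.PosSemidef ∧ (1 - P).PosSemidef ∧
      trPlus A = ((P * A).trace).re := by
  obtain ⟨P, h1, h2, h3⟩ := (trPlus_isGreatest hA).1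
  exact ⟨P, h1, h2, by rw [trPlus_def, (trPlus_isGreatest hA).csSup_eq, h3]⟩

lemma trPlus_zero : trPlus (0 : Matrix (Fin d) (Fin d) ℂ) = 0 := by
  rw [trPlus_def]
  have hset : {x : ℝ | ∃ P : Matrix (Fin d) (Fin d) ℂ,
      P.PosSemidef ∧ (1 - P).PosSemidef ∧ x = ((P * (0 : Matrix (Fin d) (Fin d) ℂ)).trace).re}
      = {0} := by
    ext x
    simp only [Set.mem_setOf_eq, Set.mem_singleton_iff]
    constructor
    · rintro ⟨P, -, -, rfl⟩
      simp
    · rintro rfl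
      exact ⟨0, Matrix.PosSemidef.zero, by simpa using Matrix.PosSemidef.one, by simp⟩
  rw [hset, csSup_singleton]

lemma re_trace_mul_psd_nonneg {S : Matrix (Fin d) (Fin d) ℂ}
    (hP : P.PosSemidef) (hS : S.PosSemidef) : 0 ≤ ((P * S).trace).re := by
  obtain ⟨B, hB⟩ : ∃ B : Matrix (Fin d) (Fin d) ℂ, S = Bᴴ * B := by
    open scoped MatrixOrder Matrix.Norms.L2Operator in
    exact CStarAlgebra.nonneg_iff_eq_star_mul_self.mp hS.nonneg
  have h1 : (P * S).trace = (B * P * Bᴴ).trace := by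
    rw [hB, ← Matrix.mul_assoc, Matrix.trace_mul_cycle]
  rw [h1]
  exact re_trace_nonneg (hP.mul_mul_conjTranspose_same B)

lemma re_trace_mul_comb (P B C : Matrix (Fin d) (Fin d) ℂ) (x y : ℝ) :
    ((P * (x • B + y • C)).trace).re = x * ((P * B).trace).re + y * ((P * C).trace).re := by
  rw [Matrix.mul_add, Matrix.trace_add, Matrix.mul_smul, Matrix.mul_smul,
    Matrix.trace_smul, Matrix.trace_smul, Complex.add_re, Complex.smul_re, Complex.smul_re,
    smul_eq_mul, smul_eq_mul]

lemma re_trace_mul_sub_smul (P B C : Matrix (Fin d) (Fin d) ℂ) (x : ℝ) :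
    ((P * (x • B - C)).trace).re = x * ((P * B).trace).re - ((P * C).trace).re := by
  rw [Matrix.mul_sub, Matrix.trace_sub, Matrix.mul_smul, Matrix.trace_smul, Complex.sub_re,
    Complex.smul_re, smul_eq_mul]

lemma integrable_inv_mul {g : ℝ → ℝ} (hg : Continuous g) {a b : ℝ} (ha : 0 < a) (hb : 0 < b) :
    IntervalIntegrable (fun s => s⁻¹ * g s) MeasureTheory.volume a b := by
  apply ContinuousOn.intervalIntegrable
  apply ContinuousOn.mul
  · apply ContinuousOn.inv₀ continuousOn_id
    intro x hx
    have : min a b ≤ x := (Set.mem_uIcc.mp hx).elim (fun h => le_trans (min_le_left _ _) h.1)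
      (fun h => le_trans (min_le_right _ _) h.1)
    have : 0 < x := lt_of_lt_of_le (lt_min ha hb) this
    exact ne_of_gt this
  · exact hg.continuousOn

lemma integral_inv_linear {a b : ℝ} (c e : ℝ) (ha : 0 < a) (hab : a ≤ b) :
    ∫ s in a..b, s⁻¹ * (c * (s - a) + e)
      = c * (b - a) + (e - c * a) * (Real.log b - Real.log a) := by
  have hb : 0 < b := lt_of_lt_of_le ha hab
  have hcongr : Set.EqOn (fun s : ℝ => s⁻¹ * (c * (s - a) + e))
      (fun s : ℝ => c + (e - c * a) * s⁻¹) (Set.uIcc a b) := by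
    intro s hs
    have hs0 : 0 < s := by
      rw [Set.uIcc_of_le hab] at hs
      exact lt_of_lt_of_le ha hs.1
    field_simp
    ring
  rw [intervalIntegral.integral_congr hcongr]
  have hinv : IntervalIntegrable (fun s : ℝ => (e - c * a) * s⁻¹) MeasureTheory.volume a b := by
    apply IntervalIntegrable.const_mul
    apply intervalIntegral.intervalIntegrable_inv
    · intro x hx
      rw [Set.uIcc_of_le hab] at hx
      exact ne_of_gt (lt_of_lt_of_le ha hx.1)
    · exact continuousOn_id
  rw [intervalIntegral.integral_add intervalIntegrable_const hinv,
    intervalIntegral.integral_const, intervalIntegral.integral_const_mul,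
    integral_inv_of_pos ha hb, Real.log_div hb.ne' ha.ne']
  simp [smul_eq_mul]
  ring

end DiscGapAux

set_option maxHeartbeats 1000000 in
open DiscGapAux in
/-- For states with `μσ ≤ ρ ≤ λσ` (0 < μ < λ) on a d-dimensional space and a grid
with maximal step size δ, the discretisation error of the lower-bound approximation
to `∫_μ^λ (1/s)·tr⁺(sσ − ρ) ds` is at most `2δ²d/μ`; in particular the gap between
the grid-based upper (piecewise-secant) and lower bounds is at most `2δ²d/μ`. -/
theorem discretisation_gap {d n : ℕ} (ρ σ : Matrix (Fin d) (Fin d) ℂ)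
    (hρ : IsState ρ) (hσ : IsState σ) (μ lam δ : ℝ) (hμ : 0 < μ) (hμlt : μ < lam)
    (hlow : (ρ - μ • σ).PosSemidef) (hup : (lam • σ - ρ).PosSemidef)
    (t : Fin (n + 1) → ℝ) (hmono : Monotone t)
    (h0 : t 0 = μ) (hlast : t (Fin.last n) = lam)
    (hδ : ∀ k : Fin n, t k.succ - t k.castSucc ≤ δ) :
    (∫ s in μ..lam, s⁻¹ * trPlus (s • σ - ρ))
        - (∑ k : Fin n, trPlus (Real.log (t k.castSucc / t k.succ) • ρ
            + (t k.succ - t k.castSucc) • σ))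
      ≤ 2 * δ ^ 2 * d / μ
    ∧ (∑ k : Fin n, ∫ s in (t k.castSucc)..(t k.succ), s⁻¹ *
          (((trPlus (t k.succ • σ - ρ) - trPlus (t k.castSucc • σ - ρ))
              / (t k.succ - t k.castSucc)) * (s - t k.castSucc)
            + trPlus (t k.castSucc • σ - ρ)))
        - (∑ k : Fin n, trPlus (Real.log (t k.castSucc / t k.succ) • ρ
            + (t k.succ - t k.castSucc) • σ))
      ≤ 2 * δ ^ 2 * d / μ := by
  classical
  -- dimension and grid basic facts
  have hd1 : (1:ℝ) ≤ (d:ℝ) := by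
    rcases Nat.eq_zero_or_pos d with hd | hd
    · exfalso
      have h1 := hρ.2
      subst hd
      rw [Matrix.trace] at h1
      simp at h1
    · exact_mod_cast hd
  have hn : 0 < n := by
    rcases Nat.eq_zero_or_pos n with h | h
    · exfalso
      have h1 : t 0 = lam := by
        rw [← hlast]; congr 1; subst h; rfl
      rw [h0] at h1; linarith
    · exact h
  have hδ0 : 0 ≤ δ := by
    have h1 : t (⟨0, hn⟩ : Fin n).castSucc ≤ t (⟨0, hn⟩ : Fin n).succ :=
      hmono (Fin.castSucc_le_succ _)
    have := hδ ⟨0, hn⟩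
    linarith
  have htμ : ∀ i : Fin (n+1), μ ≤ t i := fun i => by
    rw [← h0]; exact hmono (Fin.zero_le i)
  have htpos : ∀ i : Fin (n+1), 0 < t i := fun i => lt_of_lt_of_le hμ (htμ i)
  -- hermitian facts
  have hσh : σ.IsHermitian := hσ.1.1
  have hρh : ρ.IsHermitian := hρ.1.1
  have hherm : ∀ s : ℝ, (s • σ - ρ).IsHermitian := fun s => by
    rw [Matrix.IsHermitian, Matrix.conjTranspose_sub, Matrix.conjTranspose_smul,
      star_trivial, hσh.eq, hρh.eq]
  have hhermL : ∀ x y : ℝ, (x • ρ + y • σ).IsHermitian := fun x y => by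
    rw [Matrix.IsHermitian, Matrix.conjTranspose_add, Matrix.conjTranspose_smul,
      Matrix.conjTranspose_smul, star_trivial, star_trivial, hσh.eq, hρh.eq]
  -- choose maximizers
  choose Q hQ1 hQ2 hQ3 using fun τ : ℝ => exists_trPlus (hherm τ)
  obtain ⟨α, hαdef⟩ : ∃ g : ℝ → ℝ, ∀ τ, g τ = ((Q τ * σ).trace).re := ⟨_, fun _ => rfl⟩
  obtain ⟨β, hβdef⟩ : ∃ g : ℝ → ℝ, ∀ τ, g τ = ((Q τ * ρ).trace).re := ⟨_, fun _ => rfl⟩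
  have hlin : ∀ τ s : ℝ, ((Q τ * (s • σ - ρ)).trace).re = s * α τ - β τ := by
    intro τ s
    rw [re_trace_mul_sub_smul, hαdef, hβdef]
  have F2 : ∀ τ : ℝ, trPlus (τ • σ - ρ) = τ * α τ - β τ := fun τ => (hQ3 τ).trans (hlin τ τ)
  have F1 : ∀ τ s : ℝ, s * α τ - β τ ≤ trPlus (s • σ - ρ) := fun τ s => by
    rw [← hlin τ s]; exact le_trPlus (hherm s) (hQ1 τ) (hQ2 τ)
  have hα0 : ∀ τ : ℝ, 0 ≤ α τ := fun τ => by
    rw [hαdef]; exact re_trace_mul_psd_nonneg (hQ1 τ) hσ.1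
  have hα1 : ∀ τ : ℝ, α τ ≤ 1 := fun τ => by
    have h1 : 0 ≤ (((1 - Q τ) * σ).trace).re := re_trace_mul_psd_nonneg (hQ2 τ) hσ.1
    have h2 : ((1 - Q τ) * σ).trace = σ.trace - (Q τ * σ).trace := by
      rw [Matrix.sub_mul, Matrix.trace_sub, Matrix.one_mul]
    rw [h2, hσ.2, Complex.sub_re, Complex.one_re] at h1
    rw [hαdef]; linarith
  -- Lipschitz bound and continuity
  have hlipf : ∀ x y : ℝ, trPlus (x • σ - ρ) - trPlus (y • σ - ρ) ≤ |x - y| := by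
    intro x y
    have h1 := F2 x
    have h2 := F1 x y
    have h3 := hα0 x
    have h4 := hα1 x
    have h5 := le_abs_self (x - y)
    have h6 := abs_nonneg (x - y)
    nlinarith
  have hcont : Continuous (fun s : ℝ => trPlus (s • σ - ρ)) := by
    have : LipschitzWith 1 (fun s : ℝ => trPlus (s • σ - ρ)) := by
      apply LipschitzWith.of_dist_le_mul
      intro x y
      rw [Real.dist_eq, Real.dist_eq, NNReal.coe_one, one_mul, abs_sub_le_iff]
      exact ⟨hlipf x y, (hlipf y x).trans_eq (abs_sub_comm y x)⟩
    exact this.continuous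
  -- secant bound
  have hsec : ∀ a b s : ℝ, a < b → a ≤ s → s ≤ b →
      trPlus (s • σ - ρ) ≤ (trPlus (b • σ - ρ) - trPlus (a • σ - ρ)) / (b - a) * (s - a)
        + trPlus (a • σ - ρ) := by
    intro a b s hab has hsb
    have hba : (0:ℝ) < b - a := sub_pos.mpr hab
    set w : ℝ := (s - a) / (b - a) with hw
    have hw0 : 0 ≤ w := div_nonneg (by linarith) hba.le
    have hw1 : w ≤ 1 := (div_le_one hba).mpr (by linarith)
    have hs' : s = (1 - w) * a + w * b := by
      rw [hw]; field_simp; ring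
    have e0 : s * α s - β s = (1 - w) * (a * α s - β s) + w * (b * α s - β s) := by
      linear_combination (α s) * hs'
    have key : trPlus (s • σ - ρ)
        ≤ (1 - w) * trPlus (a • σ - ρ) + w * trPlus (b • σ - ρ) := by
      rw [F2 s, e0]
      have e1 := F1 s a
      have e2 := F1 s b
      nlinarith
    refine key.trans (le_of_eq ?_)
    rw [hw]
    field_simp
    ring
  -- key per-interval estimate for the second statement
  have key2 : ∀ k : Fin n,
      (∫ s in (t k.castSucc)..(t k.succ), s⁻¹ *
          (((trPlus (t k.succ • σ - ρ) - trPlus (t k.castSucc • σ - ρ))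
              / (t k.succ - t k.castSucc)) * (s - t k.castSucc)
            + trPlus (t k.castSucc • σ - ρ)))
        - trPlus (Real.log (t k.castSucc / t k.succ) • ρ + (t k.succ - t k.castSucc) • σ)
      ≤ (α (t k.succ) - α (t k.castSucc)) * (δ^2 / μ) := by
    intro k
    set a := t k.castSucc with hadef
    set b := t k.succ with hbdef
    have hab : a ≤ b := hmono (Fin.castSucc_le_succ k)
    have ha0 : 0 < a := htpos _
    have hb0 : 0 < b := htpos _
    have haμ : μ ≤ a := htμ _
    have hba : b - a ≤ δ := hδ k
    rcases eq_or_lt_of_le hab with heq | hlt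
    · rw [← heq, intervalIntegral.integral_same, div_self ha0.ne', Real.log_one, sub_self,
        zero_smul, zero_smul, add_zero, trPlus_zero, sub_self, sub_self, zero_mul]
    · have hba0 : (0:ℝ) < b - a := sub_pos.mpr hlt
      have hL : Real.log (a / b) * β a + (b - a) * α a
          ≤ trPlus (Real.log (a / b) • ρ + (b - a) • σ) := by
        have h := le_trPlus (hhermL (Real.log (a/b)) (b-a)) (hQ1 a) (hQ2 a)
        refine le_trans (le_of_eq ?_) h
        rw [re_trace_mul_comb, hαdef, hβdef]
      set m : ℝ := (trPlus (b • σ - ρ) - trPlus (a • σ - ρ)) / (b - a) with hm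
      have hI : (∫ s in a..b, s⁻¹ * (m * (s - a) + trPlus (a • σ - ρ)))
          = m * (b - a) + (trPlus (a • σ - ρ) - m * a) * (Real.log b - Real.log a) :=
        integral_inv_linear m _ ha0 hab
      have hm1 : α a ≤ m := by
        have h1 := F1 a b
        have h2 := F2 a
        rw [hm, le_div_iff₀ hba0]
        nlinarith
      have hm2 : m ≤ α b := by
        have h1 := F1 b a
        have h2 := F2 b
        rw [hm, div_le_iff₀ hba0]
        nlinarith
      have hlog1 : Real.log b - Real.log a ≤ (b - a) / a := by
        have h1 := Real.log_le_sub_one_of_pos (show (0:ℝ) < b/a by positivity)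
        rw [Real.log_div hb0.ne' ha0.ne'] at h1
        have e : b/a - 1 = (b-a)/a := by field_simp
        linarith
      have hlog2 : (b - a) / b ≤ Real.log b - Real.log a := by
        have h1 := Real.log_le_sub_one_of_pos (show (0:ℝ) < a/b by positivity)
        rw [Real.log_div ha0.ne' hb0.ne'] at h1
        have e : a/b - 1 = -((b-a)/b) := by field_simp; ring
        linarith
      have hloga : Real.log (a/b) = -(Real.log b - Real.log a) := by
        rw [Real.log_div ha0.ne' hb0.ne']; ring
      have hgap : (∫ s in a..b, s⁻¹ * (m * (s - a) + trPlus (a • σ - ρ)))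
            - trPlus (Real.log (a / b) • ρ + (b - a) • σ)
          ≤ (m - α a) * ((b - a) - a * (Real.log b - Real.log a)) := by
        rw [hI]
        have hfa := F2 a
        have e : m * (b - a) + (trPlus (a • σ - ρ) - m * a) * (Real.log b - Real.log a)
            - (Real.log (a/b) * β a + (b - a) * α a)
            = (m - α a) * ((b - a) - a * (Real.log b - Real.log a)) := by
          rw [hloga]
          linear_combination (Real.log b - Real.log a) * hfa
        linarith
      refine hgap.trans ?_
      have h1 : 0 ≤ m - α a := by linarith
      have h4 : 0 ≤ (b - a) - a * (Real.log b - Real.log a) := by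
        have h5 : a * (Real.log b - Real.log a) ≤ a * ((b - a)/a) :=
          mul_le_mul_of_nonneg_left hlog1 ha0.le
        rw [mul_div_cancel₀ _ ha0.ne'] at h5
        linarith
      have h2 : (b - a) - a * (Real.log b - Real.log a) ≤ (b - a)^2 / b := by
        have h5 : a * ((b - a)/b) ≤ a * (Real.log b - Real.log a) :=
          mul_le_mul_of_nonneg_left hlog2 ha0.le
        have e : (b - a) - a * ((b - a)/b) = (b - a)^2 / b := by
          field_simp
        linarith
      have h3 : (b - a)^2 / b ≤ δ^2 / μ := by
        apply div_le_div₀ (sq_nonneg δ) ?_ hμ (le_trans haμ hab)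
        have : 0 ≤ b - a := hba0.le
        nlinarith
      calc (m - α a) * ((b - a) - a * (Real.log b - Real.log a))
          ≤ (m - α a) * (δ^2 / μ) := mul_le_mul_of_nonneg_left (h2.trans h3) h1
        _ ≤ (α b - α a) * (δ^2 / μ) := by
            apply mul_le_mul_of_nonneg_right (by linarith) (by positivity)
  -- natural-number reindexing of the grid
  set u : ℕ → ℝ := fun i => if h : i < n + 1 then t ⟨i, h⟩ else lam with hu
  have hu1 : ∀ k : Fin n, u (k : ℕ) = t k.castSucc := by
    intro k
    rw [hu]
    simp only
    rw [dif_pos (show (k:ℕ) < n + 1 by omega)]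
    rfl
  have hu2 : ∀ k : Fin n, u ((k : ℕ) + 1) = t k.succ := by
    intro k
    rw [hu]
    simp only
    rw [dif_pos (show (k:ℕ) + 1 < n + 1 by omega)]
    rfl
  have hu0 : u 0 = μ := by
    rw [hu]; simp only; rw [dif_pos (by omega : 0 < n + 1)]; exact h0
  have hun : u n = lam := by
    rw [hu]; simp only; rw [dif_pos (by omega : n < n + 1)]; exact hlast
  have hupos : ∀ i : ℕ, 0 < u i := by
    intro i
    rw [hu]; simp only
    split
    · exact htpos _
    · linarith
  -- telescoping sum
  have htel : ∑ k : Fin n, (α (t k.succ) - α (t k.castSucc)) = α lam - α μ := by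
    have e1 : ∑ k : Fin n, (α (t k.succ) - α (t k.castSucc))
        = ∑ k : Fin n, (α (u ((k:ℕ)+1)) - α (u (k:ℕ))) :=
      Finset.sum_congr rfl fun k _ => by rw [hu1 k, hu2 k]
    rw [e1, Fin.sum_univ_eq_sum_range (fun i => α (u (i+1)) - α (u i)) n,
      Finset.sum_range_sub (fun i => α (u i)) n, hun, hu0]
  -- statement 2
  have stmt2 : (∑ k : Fin n, ∫ s in (t k.castSucc)..(t k.succ), s⁻¹ *
          (((trPlus (t k.succ • σ - ρ) - trPlus (t k.castSucc • σ - ρ))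
              / (t k.succ - t k.castSucc)) * (s - t k.castSucc)
            + trPlus (t k.castSucc • σ - ρ)))
        - (∑ k : Fin n, trPlus (Real.log (t k.castSucc / t k.succ) • ρ
            + (t k.succ - t k.castSucc) • σ))
      ≤ 2 * δ ^ 2 * d / μ := by
    rw [← Finset.sum_sub_distrib]
    calc _ ≤ ∑ k : Fin n, (α (t k.succ) - α (t k.castSucc)) * (δ^2 / μ) :=
          Finset.sum_le_sum fun k _ => key2 k
      _ = (α lam - α μ) * (δ^2 / μ) := by rw [← Finset.sum_mul, htel]
      _ ≤ 1 * (δ^2 / μ) := by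
          apply mul_le_mul_of_nonneg_right (by linarith [hα1 lam, hα0 μ]) (by positivity)
      _ ≤ 2 * δ ^ 2 * d / μ := by
          rw [one_mul, div_le_div_iff₀ hμ hμ]
          nlinarith [mul_nonneg (mul_nonneg (sq_nonneg δ) hμ.le)
            (by linarith : (0:ℝ) ≤ (d:ℝ) - 1)]
  refine ⟨?_, stmt2⟩
  -- statement 1: split the integral and compare with the secant integrals
  have hsplit : (∫ s in μ..lam, s⁻¹ * trPlus (s • σ - ρ))
      = ∑ k : Fin n, ∫ s in (t k.castSucc)..(t k.succ), s⁻¹ * trPlus (s • σ - ρ) := by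
    have hint : ∀ i : ℕ, i < n → IntervalIntegrable
        (fun s : ℝ => s⁻¹ * trPlus (s • σ - ρ)) MeasureTheory.volume (u i) (u (i+1)) :=
      fun i _ => integrable_inv_mul hcont (hupos i) (hupos (i+1))
    have h := intervalIntegral.sum_integral_adjacent_intervals hint
    rw [hu0, hun] at h
    have e1 : ∑ k : Fin n, (∫ s in (t k.castSucc)..(t k.succ), s⁻¹ * trPlus (s • σ - ρ))
        = ∑ k : Fin n, (∫ s in (u (k:ℕ))..(u ((k:ℕ)+1)), s⁻¹ * trPlus (s • σ - ρ)) :=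
      Finset.sum_congr rfl fun k _ => by rw [hu1 k, hu2 k]
    rw [e1, Fin.sum_univ_eq_sum_range
      (fun i => ∫ s in (u i)..(u (i+1)), s⁻¹ * trPlus (s • σ - ρ)) n, h]
  have hcomp : ∀ k : Fin n,
      (∫ s in (t k.castSucc)..(t k.succ), s⁻¹ * trPlus (s • σ - ρ))
      ≤ ∫ s in (t k.castSucc)..(t k.succ), s⁻¹ *
          (((trPlus (t k.succ • σ - ρ) - trPlus (t k.castSucc • σ - ρ))
              / (t k.succ - t k.castSucc)) * (s - t k.castSucc)
            + trPlus (t k.castSucc • σ - ρ)) := by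
    intro k
    set a := t k.castSucc with hadef
    set b := t k.succ with hbdef
    have hab : a ≤ b := hmono (Fin.castSucc_le_succ k)
    have ha0 : 0 < a := htpos _
    have hb0 : 0 < b := htpos _
    rcases eq_or_lt_of_le hab with heq | hlt
    · rw [← heq, intervalIntegral.integral_same, intervalIntegral.integral_same]
    · apply intervalIntegral.integral_mono_on hab
      · exact integrable_inv_mul hcont ha0 hb0
      · apply integrable_inv_mul ?_ ha0 hb0
        fun_prop
      · intro s hs
        have hs0 : 0 < s := lt_of_lt_of_le ha0 hs.1
        apply mul_le_mul_of_nonneg_left (hsec a b s hlt hs.1 hs.2) (by positivity)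
  calc (∫ s in μ..lam, s⁻¹ * trPlus (s • σ - ρ))
        - (∑ k : Fin n, trPlus (Real.log (t k.castSucc / t k.succ) • ρ
            + (t k.succ - t k.castSucc) • σ))
      ≤ (∑ k : Fin n, ∫ s in (t k.castSucc)..(t k.succ), s⁻¹ *
          (((trPlus (t k.succ • σ - ρ) - trPlus (t k.castSucc • σ - ρ))
              / (t k.succ - t k.castSucc)) * (s - t k.castSucc)
            + trPlus (t k.castSucc • σ - ρ)))
        - (∑ k : Fin n, trPlus (Real.log (t k.castSucc / t k.succ) • ρ
            + (t k.succ - t k.castSucc) • σ)) := by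
        rw [hsplit]
        exact sub_le_sub_right (Finset.sum_le_sum fun k _ => hcomp k) _
    _ ≤ 2 * δ ^ 2 * d / μ := stmt2
end
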